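/- In an associative algebra over a field, suppose elements b, c, d satisfy: b² is central, c² is central, d² is central, and b + c + d = (t/2)·1 where t is a central element. Then t·(bc - cb) = 0. -/
import Mathlib


/-- In an associative algebra over a field of characteristic ≠ 2, if b², c², d² are
central, t is central (a scalar), and b + c + d = (t/2)·1, then t·(bc - cb) = 0. -/
theorem central_squares_rel {k : Type*} [Field k] (hchar : (2 : k) ≠ 0)
    {A : Type*} [Ring A] [Algebra k A] (b c d : A) (t : k)
    (hb : ∀ x : A, x * b^2 = b^2 * x)
    (hc : ∀ x : A, x * c^2 = c^2 * x)
    (hd : ∀ x : A, x * d^2 = d^2 * x)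
    (hsum : b + c + d = algebraMap k A (t/2)) :
    algebraMap k A t * (b*c - c*b) = 0 := by
  set m : A := algebraMap k A (t/2) with hmdef
  have hm : ∀ x : A, x * m = m * x := fun x => (Algebra.commutes _ x).symm
  have hdval : d = m - b - c := by rw [← hsum]; abel
  have key : b * d^2 = d^2 * b := hd b
  rw [hdval] at key
  have ht2 : algebraMap k A t = m + m := by
    rw [hmdef, ← map_add]
    congr 1
    field_simp
    ring
  rw [ht2]
  linear_combination (norm := noncomm_ring) -key + (hm b)*m + m*(hm b)
    - 2*((hm b)*c) - b*(hm b) - (hm b)*b - (hb c) - b*(hm c) + (hm c)*b + (hc b)
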